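/- Let (G,X) be an action of a group G on a compact zero-dimensional metric space. If the topological full group of (G,X) contains a finitely generated subgroup whose action on X is expansive, then the action of G itself on X is expansive. -/

import Mathlib

/-- A homeomorphism `h` belongs to the topological full group of the action `act`:
`h` agrees with an element of the group on each piece of a finite clopen partition. -/
def InTFG {G X : Type} [Group G] [TopologicalSpace X] (act : G → X → X) (h : X → X) : Prop :=
  ∃ (k : ℕ) (p : X → Fin k) (g : Fin k → G),
    (∀ j : Fin k, IsClopen (p ⁻¹' {j})) ∧ ∀ x : X, h x = act (g (p x)) x

/-- Apply a word in the generators `h i` and their inverses. -/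
def applyWord {X : Type} [TopologicalSpace X] {n : ℕ} (h : Fin n → X ≃ₜ X) (l : List (Fin n × Bool)) (x : X) : X :=
  l.foldr (fun p z => if p.2 then h p.1 z else (h p.1).symm z) x

/-- If the topological full group of `(G, X)` contains a finitely generated subgroup
(generated by homeomorphisms `h 0, …, h (n-1)` lying in the topological full group)
acting expansively, then the action of `G` on `X` is expansive. -/
lemma exists_pos_forall_le {ι : Type*} [Fintype ι] (d : ι → ℝ) (hd : ∀ i, 0 < d i) :
    ∃ δ > 0, ∀ i, δ ≤ d i := by
  rcases isEmpty_or_nonempty ι with hι | hι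
  · exact ⟨1, one_pos, fun i => (IsEmpty.false i).elim⟩
  · refine ⟨Finset.univ.inf' Finset.univ_nonempty d, ?_, fun i => Finset.inf'_le d (Finset.mem_univ i)⟩
    rw [gt_iff_lt, Finset.lt_inf'_iff]
    exact fun i _ => hd i

theorem stmt13 {G X : Type} [Group G] [MetricSpace X] [CompactSpace X]
    [TotallyDisconnectedSpace X]
    (act : G → X → X)
    (hcont : ∀ g : G, Continuous (act g))
    (hone : ∀ x : X, act 1 x = x)
    (hmul : ∀ (g g' : G) (x : X), act (g * g') x = act g (act g' x))
    (n : ℕ) (h : Fin n → X ≃ₜ X)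
    (hTFG : ∀ i, InTFG act (h i))
    (hexp : ∃ ε > 0, ∀ x y : X, x ≠ y →
      ∃ l : List (Fin n × Bool), ε < dist (applyWord h l x) (applyWord h l y)) :
    ∃ ε > 0, ∀ x y : X, x ≠ y → ∃ g : G, ε < dist (act g x) (act g y) := by
  classical
  obtain ⟨ε, hε, hexp⟩ := hexp
  -- For each generator and direction, a clopen partition realizing it
  choose k p g hclopen heq using hTFG
  -- Combined partition data indexed by (i, b): b = true is h i, b = false is (h i).symm
  set P : (q : Fin n × Bool) → X → Fin (k q.1) :=
    fun q z => if q.2 then p q.1 z else p q.1 ((h q.1).symm z) with hP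
  have hPclopen : ∀ q j, IsClopen (P q ⁻¹' {j}) := by
    rintro ⟨i, b⟩ j
    cases b
    · exact (hclopen i j).preimage (h i).symm.continuous
    · simpa [hP] using hclopen i j
  have hstep : ∀ (i : Fin n) (b : Bool) (z : X),
      (if b then h i z else (h i).symm z) =
        act (if b then g i (P (i, b) z) else (g i (P (i, b) z))⁻¹) z := by
    intro i b z
    cases b
    · simp only [if_false, hP]
      set w := (h i).symm z with hw
      have h1 : h i w = act (g i (p i w)) w := heq i w
      have h2 : z = act (g i (p i w)) w := by
        rw [← h1, hw]; simp
      calc (h i).symm z = w := rfl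
        _ = act 1 w := (hone w).symm
        _ = act ((g i (p i w))⁻¹ * g i (p i w)) w := by rw [inv_mul_cancel]
        _ = act ((g i (p i w))⁻¹) (act (g i (p i w)) w) := hmul _ _ _
        _ = act ((g i (p i w))⁻¹) z := by rw [← h2]
    · simpa [hP] using heq i z
  -- Lebesgue numbers: nearby points lie in the same piece
  have hLeb : ∀ q : Fin n × Bool, ∃ δ > 0, ∀ x y : X, dist x y < δ → P q x = P q y := by
    intro q
    obtain ⟨δ, hδ, hball⟩ := lebesgue_number_lemma_of_metric (s := (Set.univ : Set X))
      (c := fun j : Fin (k q.1) => P q ⁻¹' {j}) isCompact_univ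
      (fun j => (hPclopen q j).isOpen) (fun z _ => Set.mem_iUnion.2 ⟨P q z, rfl⟩)
    refine ⟨δ, hδ, fun x y hxy => ?_⟩
    obtain ⟨j, hj⟩ := hball x (Set.mem_univ x)
    have hx : P q x = j := hj (Metric.mem_ball_self hδ)
    have hy : P q y = j := hj (by simpa [Metric.mem_ball, dist_comm] using hxy)
    rw [hx, hy]
  choose δf hδf hsame using hLeb
  obtain ⟨δ, hδ, hδle⟩ := exists_pos_forall_le δf hδf
  refine ⟨min ε (δ / 2), lt_min hε (by linarith), fun x y hxy => ?_⟩
  by_contra hcon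
  push_neg at hcon
  -- Inductively each word acts on both x and y by a single group element
  have key : ∀ l : List (Fin n × Bool), ∃ g0 : G,
      applyWord h l x = act g0 x ∧ applyWord h l y = act g0 y := by
    intro l
    induction l with
    | nil => exact ⟨1, (hone x).symm, (hone y).symm⟩
    | cons q l ih =>
      obtain ⟨g0, hx0, hy0⟩ := ih
      have hdist : dist (applyWord h l x) (applyWord h l y) < δ := by
        rw [hx0, hy0]
        calc dist (act g0 x) (act g0 y) ≤ min ε (δ / 2) := hcon g0
          _ ≤ δ / 2 := min_le_right _ _
          _ < δ := by linarith
      have hsame' : P q (applyWord h l x) = P q (applyWord h l y) :=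
        hsame q _ _ (lt_of_lt_of_le hdist (hδle q))
      obtain ⟨i, b⟩ := q
      refine ⟨(if b then g i (P (i, b) (applyWord h l x))
        else (g i (P (i, b) (applyWord h l x)))⁻¹) * g0, ?_, ?_⟩
      · have := hstep i b (applyWord h l x)
        show (if b then h i (applyWord h l x) else (h i).symm (applyWord h l x)) = _
        rw [this, hx0, hmul]
      · have := hstep i b (applyWord h l y)
        show (if b then h i (applyWord h l y) else (h i).symm (applyWord h l y)) = _
        rw [this, ← hsame', hy0, hmul]
  obtain ⟨l, hl⟩ := hexp x y hxy
  obtain ⟨g0, hx0, hy0⟩ := key l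
  rw [hx0, hy0] at hl
  have := hcon g0
  have : dist (act g0 x) (act g0 y) ≤ ε := le_trans this (min_le_left _ _)
  linarith
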